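/- If φ : S¹ → Γ is an H-weak-quasisymmetric homeomorphism from the unit circle (with arc-length metric) onto a metric Jordan curve Γ, then Γ is C-bounded turning with C = min{2H, H²}. -/

import Mathlib

open Metric Set

noncomputable section

abbrev S1 := AddCircle (1 : ℝ)

/-- The closed arc on the unit circle from `x` counterclockwise to `y`. -/
def arcCCW (x y : S1) : Set S1 :=
  (fun t : ℝ => x + (t : S1)) '' Set.Icc 0 ((AddCircle.equivIco 1 0 (y - x) : ℝ))

/-- The diameter distance on a Jordan curve `Γ` parametrized by `e : S1 ≃ₜ Γ`:
the diameter of the subarc of smaller diameter between `x` and `y`. -/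
def ddist {Γ : Type*} [MetricSpace Γ] (e : S1 ≃ₜ Γ) (x y : Γ) : ℝ :=
  min (diam (e '' arcCCW (e.symm x) (e.symm y))) (diam (e '' arcCCW (e.symm y) (e.symm x)))

/-- `f` is an `H`-weak-quasisymmetry. -/
def IsWeakQS {X Y : Type*} [MetricSpace X] [MetricSpace Y] (f : X → Y) (H : ℝ) : Prop :=
  ∀ x y z : X, dist x y ≤ dist x z → dist (f x) (f y) ≤ H * dist (f x) (f z)

/-- Distances of nearby points on the circle agree with the real distance. -/
lemma S1.dist_coe {s t : ℝ} (h : |s - t| ≤ 1/2) : dist ((s:ℝ):S1) ((t:ℝ):S1) = |s - t| := by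
  rw [dist_eq_norm, ← QuotientAddGroup.mk_sub]
  exact (AddCircle.norm_coe_eq_abs_iff 1 one_ne_zero).mpr (by simpa using h)

lemma S1.coe_equivIco (z : S1) : (((AddCircle.equivIco 1 0 z : ℝ)) : S1) = z :=
  (AddCircle.equivIco 1 0).symm_apply_apply z

lemma S1.equivIco_coe {r : ℝ} (h : r ∈ Set.Ico (0:ℝ) 1) :
    (AddCircle.equivIco 1 0 ((r : ℝ) : S1) : ℝ) = r := by
  have : (AddCircle.equivIco 1 0 ((r : ℝ) : S1))
      = ⟨toIcoMod one_pos 0 r, toIcoMod_mem_Ico one_pos 0 r⟩ :=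
    QuotientAddGroup.equivIcoMod_coe one_pos 0 r
  rw [this]
  exact toIcoMod_eq_self one_pos |>.mpr (by simpa using h)

/-- Core estimate: the image of a short arc has small diameter. -/
lemma core {Γ : Type*} [MetricSpace Γ] (φ : S1 ≃ₜ Γ) (H : ℝ) (hH : 1 ≤ H)
    (hφ : IsWeakQS φ H) (a : S1) (L : ℝ) (hL0 : 0 ≤ L) (hL : L ≤ 1/2) :
    diam (φ '' ((fun t : ℝ => a + (t : S1)) '' Set.Icc 0 L))
      ≤ min (2 * H) (H ^ 2) * dist (φ a) (φ (a + ((L:ℝ):S1))) := by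
  set b : S1 := a + ((L:ℝ):S1) with hb
  set d : ℝ := dist (φ a) (φ b) with hd
  have hH0 : (0:ℝ) ≤ H := le_trans zero_le_one hH
  have hd0 : 0 ≤ d := dist_nonneg
  -- circle distances inside the arc
  have hdist : ∀ s ∈ Set.Icc (0:ℝ) L, ∀ t ∈ Set.Icc (0:ℝ) L,
      dist (a + ((s:ℝ):S1)) (a + ((t:ℝ):S1)) = |s - t| := by
    intro s hs t ht
    rw [dist_add_left]
    exact S1.dist_coe (by
      rw [abs_sub_le_iff]; constructor <;> nlinarith [hs.1, hs.2, ht.1, ht.2])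
  have hda : ∀ s ∈ Set.Icc (0:ℝ) L, dist a (a + ((s:ℝ):S1)) = s := by
    intro s hs
    have := hdist 0 ⟨le_refl 0, hL0⟩ s hs
    simpa [abs_of_nonpos, hs.1, abs_of_nonneg hs.1, abs_sub_comm] using this
  have hdb : ∀ s ∈ Set.Icc (0:ℝ) L, dist b (a + ((s:ℝ):S1)) = L - s := by
    intro s hs
    have := hdist L ⟨hL0, le_refl L⟩ s hs
    rw [← hb] at this
    rw [this, abs_of_nonneg (by linarith [hs.2])]
  have hab : dist a b = L := by
    have := hda L ⟨hL0, le_refl L⟩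
    rw [← hb] at this; exact this
  -- first-level QS estimates from the endpoints
  have h1 : ∀ s ∈ Set.Icc (0:ℝ) L, dist (φ a) (φ (a + ((s:ℝ):S1))) ≤ H * d := by
    intro s hs
    exact hφ a _ b (by rw [hda s hs, hab]; exact hs.2)
  have h2 : ∀ s ∈ Set.Icc (0:ℝ) L, dist (φ b) (φ (a + ((s:ℝ):S1))) ≤ H * d := by
    intro s hs
    have : dist b (a + ((s:ℝ):S1)) ≤ dist b a := by
      rw [hdb s hs, dist_comm, hab]; linarith [hs.1]
    have := hφ b _ a this
    rwa [dist_comm (φ b) (φ a), ← hd] at this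
  -- pointwise estimate
  have key : ∀ p ∈ φ '' ((fun t : ℝ => a + (t : S1)) '' Set.Icc 0 L),
      ∀ q ∈ φ '' ((fun t : ℝ => a + (t : S1)) '' Set.Icc 0 L),
      dist p q ≤ min (2 * H) (H ^ 2) * d := by
    rintro p ⟨-, ⟨s, hs, rfl⟩, rfl⟩ q ⟨-, ⟨t, ht, rfl⟩, rfl⟩
    rw [min_mul_of_nonneg _ _ hd0, le_min_iff]
    constructor
    · -- 2H bound via triangle inequality through φ a
      calc dist (φ (a + ((s:ℝ):S1))) (φ (a + ((t:ℝ):S1)))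
          ≤ dist (φ (a + ((s:ℝ):S1))) (φ a) + dist (φ a) (φ (a + ((t:ℝ):S1))) :=
            dist_triangle _ _ _
        _ ≤ H * d + H * d := by
            rw [dist_comm (φ (a + ((s:ℝ):S1))) (φ a)]
            exact add_le_add (h1 s hs) (h1 t ht)
        _ = 2 * H * d := by ring
    · -- H² bound
      rcases le_total s t with hst | hst
      · -- use endpoint b
        have harc : dist (a + ((s:ℝ):S1)) (a + ((t:ℝ):S1)) ≤ dist (a + ((s:ℝ):S1)) b := by
          rw [hdist s hs t ht, dist_comm, hdb s hs, abs_sub_comm,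
            abs_of_nonneg (by linarith)]
          linarith [ht.2]
        calc dist (φ (a + ((s:ℝ):S1))) (φ (a + ((t:ℝ):S1)))
            ≤ H * dist (φ (a + ((s:ℝ):S1))) (φ b) := hφ _ _ _ harc
          _ ≤ H * (H * d) := by
              rw [dist_comm]
              exact mul_le_mul_of_nonneg_left (h2 s hs) hH0
          _ = H ^ 2 * d := by ring
      · -- use endpoint a
        have harc : dist (a + ((s:ℝ):S1)) (a + ((t:ℝ):S1)) ≤ dist (a + ((s:ℝ):S1)) a := by
          rw [hdist s hs t ht, dist_comm, hda s hs, abs_of_nonneg (by linarith)]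
          linarith [ht.1]
        calc dist (φ (a + ((s:ℝ):S1))) (φ (a + ((t:ℝ):S1)))
            ≤ H * dist (φ (a + ((s:ℝ):S1))) (φ a) := hφ _ _ _ harc
          _ ≤ H * (H * d) := by
              rw [dist_comm]
              exact mul_le_mul_of_nonneg_left (h1 s hs) hH0
          _ = H ^ 2 * d := by ring
  exact diam_le_of_forall_dist_le
    (mul_nonneg (le_min (by linarith) (by positivity)) hd0) key

/-- If `φ : S¹ → Γ` is an `H`-weak-quasisymmetric homeomorphism onto a metric Jordan
curve `Γ`, then `Γ` is `C`-bounded turning with `C = min {2H, H²}`. -/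
theorem weakQS_param_implies_boundedTurning
    {Γ : Type*} [MetricSpace Γ] (φ : S1 ≃ₜ Γ) (H : ℝ) (hH : 1 ≤ H)
    (hφ : IsWeakQS φ H) :
    ∀ x y : Γ, ddist φ x y ≤ min (2 * H) (H ^ 2) * dist x y := by
  intro x y
  set a : S1 := φ.symm x with ha
  set b : S1 := φ.symm y with hbdef
  set L : ℝ := (AddCircle.equivIco 1 0 (b - a) : ℝ) with hLdef
  have hLmem : L ∈ Set.Ico (0:ℝ) (0 + 1) := (AddCircle.equivIco 1 0 (b - a)).2
  have hL0 : 0 ≤ L := hLmem.1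
  have hL1 : L < 1 := by simpa using hLmem.2
  have hsec : ((L:ℝ):S1) = b - a := S1.coe_equivIco (b - a)
  have hbL : a + ((L:ℝ):S1) = b := by rw [hsec]; abel
  have hφa : φ a = x := φ.apply_symm_apply x
  have hφb : φ b = y := φ.apply_symm_apply y
  rcases le_or_gt L (1/2) with hhalf | hhalf
  · -- the arc from a to b is short
    refine le_trans (min_le_left _ _) ?_
    have := core φ H hH hφ a L hL0 hhalf
    rw [hbL, hφa, hφb] at this
    exact this
  · -- the arc from b to a is short
    refine le_trans (min_le_right _ _) ?_
    have hLne : L ≠ 0 := by linarith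
    have hcoe : a - b = (((1 - L : ℝ)):S1) := by
      have : (((1 - L : ℝ)):S1) = -((L:ℝ):S1) := by
        have h1 : (((1:ℝ)):S1) = 0 := by
          simp [AddCircle.coe_period]
        rw [show ((1 - L : ℝ)) = 1 + (-L) by ring, QuotientAddGroup.mk_add,
          QuotientAddGroup.mk_neg, h1]
        abel
      rw [this, hsec]; abel
    have hL' : (AddCircle.equivIco 1 0 (a - b) : ℝ) = 1 - L := by
      rw [hcoe]
      exact S1.equivIco_coe ⟨by linarith, by linarith⟩
    have harc : arcCCW b a = (fun t : ℝ => b + (t : S1)) '' Set.Icc 0 (1 - L) := by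
      rw [arcCCW, hL']
    have hbL' : b + (((1 - L : ℝ)):S1) = a := by rw [← hcoe]; abel
    have := core φ H hH hφ b (1 - L) (by linarith) (by linarith)
    rw [hbL', hφa, hφb, dist_comm y x] at this
    rw [harc]
    exact this
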